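/- Every atomic selfish routing instance with pricing in which every congestion cost is affine, every demand r_i is strictly positive, and every strategy set Π_i is finite and nonempty, admits at least one equilibrium strategy profile (a pure Nash equilibrium). -/
import Mathlib


/-!
Atomic selfish routing with pricing.  Edges form a finite type `E`; there are `k`
players, player `i` has demand `r i > 0` and a finite nonempty set `Paths i` of paths
(finite subsets of `E`).  Edge `e` has affine congestion cost `c_e(x) = a e * x + b e`
and per-unit price function `u e : ℝ → ℝ`.
-/

open Finset

/-- The flow on edge `e` under profile `P`: the sum of the demands of the players
whose chosen path contains `e`. -/
noncomputable def edgeFlow {E : Type*} [Fintype E] [DecidableEq E] {k : ℕ}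
    (r : Fin k → ℝ) (P : Fin k → Finset E) (e : E) : ℝ :=
  ∑ i, if e ∈ P i then r i else 0

/-- The per-unit cost to player `i` under profile `P`:
`t_i(P) = Σ_{e ∈ P_i} ( c_e(f_e(P)) + u_e(r_i) )` with `c_e(x) = a e * x + b e`. -/
noncomputable def playerCost {E : Type*} [Fintype E] [DecidableEq E] {k : ℕ}
    (a b : E → ℝ) (u : E → ℝ → ℝ) (r : Fin k → ℝ) (P : Fin k → Finset E) (i : Fin k) : ℝ :=
  ∑ e ∈ P i, (a e * edgeFlow r P e + b e + u e (r i))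

/-- A profile `P` is an equilibrium if no player can decrease its per-unit cost by
unilaterally switching to another available path. -/
def IsEquilibrium {E : Type*} [Fintype E] [DecidableEq E] {k : ℕ}
    (a b : E → ℝ) (u : E → ℝ → ℝ) (r : Fin k → ℝ)
    (Paths : Fin k → Finset (Finset E)) (P : Fin k → Finset E) : Prop :=
  ∀ i : Fin k, ∀ Q ∈ Paths i,
    playerCost a b u r P i ≤ playerCost a b u r (Function.update P i Q) i

/-- Rosenthal-type weighted potential for affine costs with pricing. -/
noncomputable def potential {E : Type*} [Fintype E] [DecidableEq E] {k : ℕ}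
    (a b : E → ℝ) (u : E → ℝ → ℝ) (r : Fin k → ℝ) (P : Fin k → Finset E) : ℝ :=
  (∑ e, (a e * (edgeFlow r P e) ^ 2 + 2 * b e * edgeFlow r P e))
  + ∑ i, ∑ e ∈ P i, (a e * (r i) ^ 2 + 2 * r i * u e (r i))

lemma edgeFlow_update {E : Type*} [Fintype E] [DecidableEq E] {k : ℕ}
    (r : Fin k → ℝ) (P : Fin k → Finset E) (i : Fin k) (Q : Finset E) (e : E) :
    edgeFlow r (Function.update P i Q) e
      = edgeFlow r P e + ((if e ∈ Q then r i else 0) - (if e ∈ P i then r i else 0)) := by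
  have h : ∀ j, (if e ∈ Function.update P i Q j then r j else 0)
      = (if e ∈ P j then r j else 0)
        + (if j = i then ((if e ∈ Q then r i else 0) - (if e ∈ P i then r i else 0)) else 0) := by
    intro j
    rcases eq_or_ne j i with rfl | h
    · simp [Function.update_self]
    · simp [Function.update_of_ne h, h]
  simp only [edgeFlow, h, Finset.sum_add_distrib, Finset.sum_ite_eq' Finset.univ i,
    Finset.mem_univ, if_true]

lemma potential_diff {E : Type*} [Fintype E] [DecidableEq E] {k : ℕ}
    (a b : E → ℝ) (u : E → ℝ → ℝ) (r : Fin k → ℝ)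
    (P : Fin k → Finset E) (i : Fin k) (Q : Finset E) :
    potential a b u r (Function.update P i Q) - potential a b u r P
      = 2 * r i * (playerCost a b u r (Function.update P i Q) i - playerCost a b u r P i) := by
  set P' := Function.update P i Q with hP'
  -- the player-constant part of the potential
  have hconst : (∑ j, ∑ e ∈ P' j, (a e * (r j) ^ 2 + 2 * r j * u e (r j)))
      - (∑ j, ∑ e ∈ P j, (a e * (r j) ^ 2 + 2 * r j * u e (r j)))
      = (∑ e ∈ Q, (a e * (r i) ^ 2 + 2 * r i * u e (r i)))
        - (∑ e ∈ P i, (a e * (r i) ^ 2 + 2 * r i * u e (r i))) := by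
    rw [← Finset.sum_sub_distrib]
    rw [Finset.sum_eq_single i]
    · simp [hP', Function.update_self]
    · intro j _ hj; simp [hP', Function.update_of_ne hj]
    · simp
  have hsumQ : ∀ (S : Finset E) (g : E → ℝ),
      (∑ e ∈ S, g e) = ∑ e : E, (if e ∈ S then g e else 0) := by
    intro S g
    rw [Finset.sum_ite_mem, Finset.univ_inter]
  have hcost : ∀ (R : Fin k → Finset E) (j : Fin k),
      playerCost a b u r R j
        = ∑ e : E, (if e ∈ R j then a e * edgeFlow r R e + b e + u e (r j) else 0) := by
    intro R j; rw [playerCost, hsumQ]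
  have hQi : P' i = Q := Function.update_self i Q P
  rw [potential, potential, hcost, hcost, hQi,
    show ∀ x y z w : ℝ, (x + y) - (z + w) = (x - z) + (y - w) from fun _ _ _ _ => by ring,
    hconst, hsumQ Q, hsumQ (P i)]
  rw [← Finset.sum_sub_distrib, ← Finset.sum_sub_distrib, ← Finset.sum_add_distrib,
    ← Finset.sum_sub_distrib, Finset.mul_sum]
  apply Finset.sum_congr rfl
  intro e _
  have hf := edgeFlow_update r P i Q e
  rw [← hP'] at hf
  by_cases h1 : e ∈ Q <;> by_cases h2 : e ∈ P i <;>
    simp only [h1, h2, if_true, if_false] at hf ⊢ <;> rw [hf] <;> ring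

/-- Every atomic selfish routing instance with pricing in which every congestion cost is
affine, every demand is strictly positive, and every strategy set is finite and nonempty
admits at least one pure Nash equilibrium. -/
theorem exists_equilibrium {E : Type*} [Fintype E] [DecidableEq E] {k : ℕ}
    (a b : E → ℝ) (u : E → ℝ → ℝ) (r : Fin k → ℝ) (hr : ∀ i, 0 < r i)
    (Paths : Fin k → Finset (Finset E)) (hPaths : ∀ i, (Paths i).Nonempty) :
    ∃ P : Fin k → Finset E, (∀ i, P i ∈ Paths i) ∧ IsEquilibrium a b u r Paths P := by
  haveI : Nonempty (∀ i, {s // s ∈ Paths i}) :=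
    ⟨fun i => ⟨(hPaths i).choose, (hPaths i).choose_spec⟩⟩
  obtain ⟨d, -, hd⟩ := Finset.exists_min_image (Finset.univ : Finset (∀ i, {s // s ∈ Paths i}))
    (fun d => potential a b u r (fun j => (d j : Finset E))) Finset.univ_nonempty
  refine ⟨fun j => (d j : Finset E), fun j => (d j).2, ?_⟩
  intro i Q hQ
  set P : Fin k → Finset E := fun j => (d j : Finset E) with hP
  have hup : (fun j => ((Function.update d i ⟨Q, hQ⟩ j : {s // s ∈ Paths j}) : Finset E)) = Function.update P i Q := by
    funext j
    rcases eq_or_ne j i with rfl | h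
    · simp [Function.update_self]
    · simp [Function.update_of_ne h, hP]
  have hmin := hd (Function.update d i ⟨Q, hQ⟩) (Finset.mem_univ _)
  rw [hup] at hmin
  have hdiff := potential_diff a b u r P i Q
  have h2 : 0 ≤ 2 * r i * (playerCost a b u r (Function.update P i Q) i - playerCost a b u r P i) := by
    rw [← hdiff]; linarith
  have hri : (0:ℝ) < 2 * r i := by linarith [hr i]
  have := (mul_nonneg_iff_of_pos_left hri).mp h2
  linarith
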